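/- Let G' be the odd-degree transformation of a finite simple graph G. A binary opinion profile μ on G is a valid opinion profile on G if and only if its odd-degree transformation μ' is a valid opinion profile on G'. -/

import Mathlib

open Classical

/-- A binary opinion profile `μ` on a finite simple graph `G` is valid under the
local majority rule. -/
def IsValidProfile {V : Type*} [Fintype V] (G : SimpleGraph V) (μ : V → Bool) : Prop :=
  ∀ v : V,
    ((G.neighborFinset v).filter fun u => μ u = μ v).card ≥
    ((G.neighborFinset v).filter fun u => μ u ≠ μ v).card

/-- The odd-degree transformation of `G`: keep all vertices and edges of `G`
(the left summands), and attach to each even-degree vertex `v` a new auxiliary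
pendant vertex `Sum.inr ⟨v, _⟩` adjacent only to `v`. -/
def oddTransform {V : Type*} [Fintype V] (G : SimpleGraph V) :
    SimpleGraph (V ⊕ {v : V // Even (G.degree v)}) where
  Adj x y :=
    match x, y with
    | Sum.inl a, Sum.inl b => G.Adj a b
    | Sum.inl a, Sum.inr u => u.val = a
    | Sum.inr u, Sum.inl a => u.val = a
    | Sum.inr _, Sum.inr _ => False
  symm := by
    constructor
    intro x y h
    cases x <;> cases y <;> simp_all [SimpleGraph.adj_comm]
  loopless := by
    constructor
    intro x h
    cases x <;> simp_all

/-- The odd-degree transformation of a profile `μ` on `G`: original vertices keep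
their opinion, each auxiliary vertex copies the opinion of the vertex it is
attached to. -/
def oddTransformProfile {V : Type*} [Fintype V] (G : SimpleGraph V) (μ : V → Bool) :
    V ⊕ {v : V // Even (G.degree v)} → Bool :=
  Sum.elim μ (fun u => μ u.val)

lemma oddTransform_adj_inl_inl {V : Type*} [Fintype V] (G : SimpleGraph V) (a b : V) :
    (oddTransform G).Adj (Sum.inl a) (Sum.inl b) ↔ G.Adj a b := Iff.rfl

lemma oddTransform_adj_inl_inr {V : Type*} [Fintype V] (G : SimpleGraph V) (a : V)
    (u : {v : V // Even (G.degree v)}) :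
    (oddTransform G).Adj (Sum.inl a) (Sum.inr u) ↔ u.val = a := Iff.rfl

lemma oddTransform_adj_inr_inl {V : Type*} [Fintype V] (G : SimpleGraph V) (a : V)
    (u : {v : V // Even (G.degree v)}) :
    (oddTransform G).Adj (Sum.inr u) (Sum.inl a) ↔ u.val = a := Iff.rfl

lemma oddTransform_adj_inr_inr {V : Type*} [Fintype V] (G : SimpleGraph V)
    (u w : {v : V // Even (G.degree v)}) :
    ¬ (oddTransform G).Adj (Sum.inr u) (Sum.inr w) := fun h => h

/-- A profile `μ` is valid on `G` iff its odd-degree transformation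
is valid on the odd-degree transformation of `G`. -/
theorem valid_iff_oddTransform_valid {V : Type*} [Fintype V]
    (G : SimpleGraph V) (μ : V → Bool) :
    IsValidProfile G μ ↔ IsValidProfile (oddTransform G) (oddTransformProfile G μ) := by
  classical
  set μ' := oddTransformProfile G μ with hμ'
  -- auxiliary vertex condition always holds
  have hinr : ∀ (u : {v : V // Even (G.degree v)}),
      (((oddTransform G).neighborFinset (Sum.inr u)).filter
          fun x => μ' x = μ' (Sum.inr u)).card ≥
      (((oddTransform G).neighborFinset (Sum.inr u)).filter
          fun x => μ' x ≠ μ' (Sum.inr u)).card := by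
    intro u
    have : (((oddTransform G).neighborFinset (Sum.inr u)).filter
        fun x => μ' x ≠ μ' (Sum.inr u)) = ∅ := by
      ext x
      cases x with
      | inl a =>
        simp only [Finset.mem_filter, SimpleGraph.mem_neighborFinset,
          oddTransform_adj_inr_inl, Finset.notMem_empty, iff_false, not_and]
        rintro rfl
        simp [hμ', oddTransformProfile]
      | inr w =>
        simp [SimpleGraph.mem_neighborFinset, oddTransform_adj_inr_inr]
    rw [this]
    simp
  -- the key vertex-wise computation for original vertices
  have key : ∀ v : V,
      ((((oddTransform G).neighborFinset (Sum.inl v)).filter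
          fun x => μ' x = μ' (Sum.inl v)).card ≥
        (((oddTransform G).neighborFinset (Sum.inl v)).filter
          fun x => μ' x ≠ μ' (Sum.inl v)).card)
      ↔ (((G.neighborFinset v).filter fun u => μ u = μ v).card ≥
          ((G.neighborFinset v).filter fun u => μ u ≠ μ v).card) := by
    intro v
    have hagree : (((oddTransform G).neighborFinset (Sum.inl v)).filter
        fun x => μ' x = μ' (Sum.inl v)) =
        Finset.disjSum ((G.neighborFinset v).filter fun u => μ u = μ v)
          (Finset.univ.filter fun u : {w : V // Even (G.degree w)} => u.val = v) := by
      ext x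
      cases x with
      | inl a =>
        simp [SimpleGraph.mem_neighborFinset, oddTransform_adj_inl_inl, hμ',
          oddTransformProfile]
      | inr w =>
        simp only [SimpleGraph.mem_neighborFinset, Finset.mem_filter,
          oddTransform_adj_inl_inr, Finset.inr_mem_disjSum, Finset.mem_univ, true_and]
        constructor
        · rintro ⟨rfl, _⟩; rfl
        · rintro rfl; simp [hμ', oddTransformProfile]
    have hdis : (((oddTransform G).neighborFinset (Sum.inl v)).filter
        fun x => μ' x ≠ μ' (Sum.inl v)) =
        Finset.disjSum ((G.neighborFinset v).filter fun u => μ u ≠ μ v)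
          (∅ : Finset {w : V // Even (G.degree w)}) := by
      ext x
      cases x with
      | inl a =>
        simp [SimpleGraph.mem_neighborFinset, oddTransform_adj_inl_inl, hμ',
          oddTransformProfile]
      | inr w =>
        simp only [SimpleGraph.mem_neighborFinset, Finset.mem_filter,
          oddTransform_adj_inl_inr, Finset.inr_mem_disjSum, Finset.notMem_empty,
          iff_false, not_and]
        rintro rfl
        simp [hμ', oddTransformProfile]
    have hcard : (Finset.univ.filter fun u : {w : V // Even (G.degree w)} => u.val = v).card
        = if Even (G.degree v) then 1 else 0 := by
      by_cases h : Even (G.degree v)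
      · rw [if_pos h]
        have : (Finset.univ.filter fun u : {w : V // Even (G.degree w)} => u.val = v)
            = {⟨v, h⟩} := by
          ext u
          simp [Subtype.ext_iff]
        rw [this, Finset.card_singleton]
      · rw [if_neg h]
        have : (Finset.univ.filter fun u : {w : V // Even (G.degree w)} => u.val = v)
            = ∅ := by
          ext u
          simp only [Finset.mem_filter, Finset.mem_univ, true_and, Finset.notMem_empty,
            iff_false]
          rintro rfl
          exact h u.property
        rw [this, Finset.card_empty]
    rw [hagree, hdis, Finset.card_disjSum, Finset.card_disjSum, hcard, Finset.card_empty]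
    set A := ((G.neighborFinset v).filter fun u => μ u = μ v).card
    set D := ((G.neighborFinset v).filter fun u => μ u ≠ μ v).card
    by_cases h : Even (G.degree v)
    · rw [if_pos h]
      have hAD : A + D = G.degree v := by
        rw [← SimpleGraph.card_neighborFinset_eq_degree]
        exact Finset.card_filter_add_card_filter_not _
      obtain ⟨k, hk⟩ := h
      omega
    · rw [if_neg h]
      omega
  constructor
  · intro h x
    cases x with
    | inl v => exact (key v).2 (h v)
    | inr u => exact hinr u
  · intro h v
    exact (key v).1 (h (Sum.inl v))
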